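/- Let B ⊆ ℝ² be a set such that for every x₀ ∈ ℝ the vertical slice B ∩ ({x₀} × ℝ) is either empty or path-connected. Then for every x₀ ∈ ℝ such that the vertical line {x₀} × ℝ meets the interior Int(B) of B in ℝ², the vertical slice Int(B) ∩ ({x₀} × ℝ) is path-connected. -/

import Mathlib

/-- Key step: if `(x₀,a)` and `(x₀,b)` are in the interior of `B` and `a ≤ c ≤ b`,
then `(x₀,c)` is in the interior of `B`. -/
lemma stmt3_aux (B : Set (ℝ × ℝ))
    (hslice : ∀ x₀ : ℝ, B ∩ {p : ℝ × ℝ | p.1 = x₀} = ∅ ∨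
      IsPathConnected (B ∩ {p : ℝ × ℝ | p.1 = x₀}))
    (x₀ a b c : ℝ) (ha : (x₀, a) ∈ interior B) (hb : (x₀, b) ∈ interior B)
    (hac : a ≤ c) (hcb : c ≤ b) : (x₀, c) ∈ interior B := by
  rcases eq_or_lt_of_le hac with rfl | hac
  · exact ha
  rcases eq_or_lt_of_le hcb with rfl | hcb
  · exact hb
  have hab : a < b := lt_trans hac hcb
  obtain ⟨δ₁, hδ₁, h1⟩ := Metric.isOpen_iff.mp isOpen_interior _ ha
  obtain ⟨δ₂, hδ₂, h2⟩ := Metric.isOpen_iff.mp isOpen_interior _ hb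
  set δ := min δ₁ δ₂ with hδdef
  have hδ : 0 < δ := lt_min hδ₁ hδ₂
  -- For every x near x₀, the whole segment {x} × [a,b] lies in B
  have key : ∀ x : ℝ, dist x x₀ < δ → ∀ y ∈ Set.Icc a b, (x, y) ∈ B := by
    intro x hxd y hy
    have hxa : (x, a) ∈ B := by
      have : (x, a) ∈ Metric.ball (x₀, a) δ₁ := by
        simp [Prod.dist_eq, dist_self]
        exact lt_of_lt_of_le hxd (min_le_left _ _)
      exact interior_subset (h1 this)
    have hxb : (x, b) ∈ B := by
      have : (x, b) ∈ Metric.ball (x₀, b) δ₂ := by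
        simp [Prod.dist_eq, dist_self]
        exact lt_of_lt_of_le hxd (min_le_right _ _)
      exact interior_subset (h2 this)
    have hmema : (x, a) ∈ B ∩ {p : ℝ × ℝ | p.1 = x} := ⟨hxa, rfl⟩
    have hmemb : (x, b) ∈ B ∩ {p : ℝ × ℝ | p.1 = x} := ⟨hxb, rfl⟩
    rcases hslice x with hempty | hpc
    · exact absurd (hempty ▸ hmema) (Set.notMem_empty _)
    have hconn : IsPreconnected (B ∩ {p : ℝ × ℝ | p.1 = x}) :=
      hpc.isConnected.isPreconnected
    have himg : IsPreconnected (Prod.snd '' (B ∩ {p : ℝ × ℝ | p.1 = x})) :=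
      hconn.image _ continuous_snd.continuousOn
    have hIcc : Set.Icc a b ⊆ Prod.snd '' (B ∩ {p : ℝ × ℝ | p.1 = x}) :=
      himg.Icc_subset ⟨(x, a), hmema, rfl⟩ ⟨(x, b), hmemb, rfl⟩
    obtain ⟨q, ⟨hqB, hqx⟩, hqy⟩ := hIcc hy
    have : q = (x, y) := Prod.ext hqx hqy
    exact this ▸ hqB
  -- the open box around (x₀, c)
  refine mem_interior.mpr ⟨Set.Ioo (x₀ - δ) (x₀ + δ) ×ˢ Set.Ioo a b, ?_, ?_, ?_⟩
  · rintro ⟨x, y⟩ ⟨hx, hy⟩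
    have hxd : dist x x₀ < δ := by
      rw [Real.dist_eq, abs_lt]
      constructor <;> [linarith [hx.1]; linarith [hx.2]]
    exact key x hxd y ⟨le_of_lt hy.1, le_of_lt hy.2⟩
  · exact isOpen_Ioo.prod isOpen_Ioo
  · exact ⟨⟨by linarith, by linarith⟩, hac, hcb⟩

/-- If every vertical slice of `B ⊆ ℝ²` is empty or path-connected, then for every
`x₀` such that the vertical line `{x₀} × ℝ` meets the interior of `B`, the vertical
slice `Int(B) ∩ ({x₀} × ℝ)` is path-connected. -/
theorem stmt3 (B : Set (ℝ × ℝ))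
    (hslice : ∀ x₀ : ℝ, B ∩ {p : ℝ × ℝ | p.1 = x₀} = ∅ ∨
      IsPathConnected (B ∩ {p : ℝ × ℝ | p.1 = x₀}))
    (x₀ : ℝ) (hx : (interior B ∩ {p : ℝ × ℝ | p.1 = x₀}).Nonempty) :
    IsPathConnected (interior B ∩ {p : ℝ × ℝ | p.1 = x₀}) := by
  set S : Set ℝ := {y | (x₀, y) ∈ interior B} with hSdef
  have hSne : S.Nonempty := by
    obtain ⟨p, hpB, hpx⟩ := hx
    refine ⟨p.2, ?_⟩
    have : (x₀, p.2) = p := by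
      have : p.1 = x₀ := hpx
      exact Prod.ext this.symm rfl
    simpa [hSdef, this] using hpB
  have hord : S.OrdConnected := by
    refine ⟨fun a ha b hb c hc => ?_⟩
    exact stmt3_aux B hslice x₀ a b c ha hb hc.1 hc.2
  have hconv : Convex ℝ S := by
    rw [show Convex ℝ S ↔ S.OrdConnected from ⟨fun h => h.ordConnected,
      fun h => ?_⟩]
    · exact hord
    · exact h.convex
  have hpath : IsPathConnected S := hconv.isPathConnected hSne
  have hcont : Continuous (fun y : ℝ => (x₀, y)) := continuous_const.prodMk continuous_id
  have himg := hpath.image hcont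
  have heq : (fun y : ℝ => (x₀, y)) '' S = interior B ∩ {p : ℝ × ℝ | p.1 = x₀} := by
    ext p
    constructor
    · rintro ⟨y, hy, rfl⟩
      exact ⟨hy, rfl⟩
    · rintro ⟨hpB, hpx⟩
      obtain ⟨p1, p2⟩ := p
      have hpx : p1 = x₀ := hpx
      subst hpx
      exact ⟨p2, hpB, rfl⟩
  exact heq ▸ himg
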